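/- Abel's five-term relation for the Rogers dilogarithm: define R(z) = Li₂(z) + (1/2)·log(z)·log(1−z) for z ∈ (0,1), where Li₂(z) = ∑_{n≥1} zⁿ/n². Then for all x, y ∈ (0,1), R(x) + R((1−x)/(1−xy)) + R((1−y)/(1−xy)) + R(y) + R(1−xy) = π²/2 (a constant independent of x and y). -/

import Mathlib

/-- The real dilogarithm on `(0,1)`, defined by its power series. -/
noncomputable def Li2R (x : ℝ) : ℝ := ∑' n : ℕ, x ^ (n + 1) / ((n : ℝ) + 1) ^ 2

/-- The Rogers dilogarithm `R(z) = Li₂(z) + (1/2)·log z·log(1−z)` on `(0,1)`. -/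
noncomputable def RogersL (z : ℝ) : ℝ := Li2R z + (1 / 2) * Real.log z * Real.log (1 - z)

open Real Filter Set

lemma summable_inv_sq : Summable (fun n : ℕ => 1 / ((n:ℝ)+1)^2) := by
  have h := Real.summable_one_div_nat_pow.mpr (le_refl 2)
  have := (summable_nat_add_iff 1).mpr h
  simpa using this

lemma li2_summable {x : ℝ} (h : |x| ≤ 1) :
    Summable (fun n : ℕ => x ^ (n + 1) / ((n : ℝ) + 1) ^ 2) := by
  apply Summable.of_norm
  apply Summable.of_nonneg_of_le (fun n => norm_nonneg _) _ summable_inv_sq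
  intro n
  rw [norm_div, norm_pow]
  have h2 : ‖((n:ℝ)+1)^2‖ = ((n:ℝ)+1)^2 := by
    rw [Real.norm_eq_abs, abs_of_nonneg]; positivity
  rw [h2]
  gcongr
  exact pow_le_one₀ (abs_nonneg x) h

lemma li2_hasSum {x : ℝ} (h : |x| ≤ 1) :
    HasSum (fun n : ℕ => x ^ (n + 1) / ((n : ℝ) + 1) ^ 2) (Li2R x) :=
  (li2_summable h).hasSum

lemma li2_zero : Li2R 0 = 0 := by
  simp [Li2R]

lemma li2_one : Li2R 1 = π ^ 2 / 6 := by
  have h := hasSum_zeta_two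
  have h2 := (hasSum_nat_add_iff' 1).mpr h
  simp only [Finset.range_one, Finset.sum_singleton] at h2
  have h3 : HasSum (fun n : ℕ => (1:ℝ) ^ (n + 1) / ((n : ℝ) + 1) ^ 2) (π ^ 2 / 6) := by
    have : π ^ 2 / 6 - 1 / ((0:ℕ):ℝ) ^ 2 = π ^ 2 / 6 := by norm_num
    rw [this] at h2
    convert h2 using 2 with n
    · rfl
    push_cast; ring_nf
  exact h3.tsum_eq

lemma li2_continuousOn : ContinuousOn Li2R (Set.Icc (-1:ℝ) 1) := by
  rw [continuousOn_iff_continuous_restrict]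
  have : (Set.Icc (-1:ℝ) 1).restrict Li2R =
      fun x : Set.Icc (-1:ℝ) 1 => ∑' n : ℕ, (x:ℝ) ^ (n + 1) / ((n : ℝ) + 1) ^ 2 := rfl
  change Continuous (fun x : Set.Icc (-1:ℝ) 1 => ∑' n : ℕ, (x:ℝ) ^ (n + 1) / ((n : ℝ) + 1) ^ 2)
  apply continuous_tsum (u := fun n : ℕ => 1 / ((n:ℝ)+1)^2)
  · intro n
    exact (continuous_subtype_val.pow _).div_const _
  · exact summable_inv_sq
  · intro n x
    rw [norm_div, norm_pow]
    have h2 : ‖((n:ℝ)+1)^2‖ = ((n:ℝ)+1)^2 := by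
      rw [Real.norm_eq_abs, abs_of_nonneg]; positivity
    rw [h2]
    gcongr
    have hx := x.2
    rw [Real.norm_eq_abs]
    exact pow_le_one₀ (abs_nonneg _) (abs_le.mpr ⟨hx.1, hx.2⟩)

lemma li2_hasDerivAt {z : ℝ} (h0 : 0 < z) (h1 : z < 1) :
    HasDerivAt Li2R (-Real.log (1 - z) / z) z := by
  set r : ℝ := (1 + z) / 2 with hr
  have hr0 : 0 < r := by positivity
  have hrlt : r < 1 := by rw [hr]; linarith
  have hzr : z < r := by rw [hr]; linarith
  have key : HasDerivAt (fun w => ∑' n : ℕ, w ^ (n + 1) / ((n : ℝ) + 1) ^ 2)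
      (∑' n : ℕ, z ^ n / ((n : ℝ) + 1)) z := by
    apply hasDerivAt_tsum_of_isPreconnected (u := fun n : ℕ => r ^ n)
      (t := Set.Ioo (-r) r) (y₀ := 0)
      (g' := fun n w => w ^ n / ((n : ℝ) + 1))
      (summable_geometric_of_lt_one hr0.le hrlt) isOpen_Ioo
      (convex_Ioo _ _).isPreconnected
    · intro n w _
      have h := (hasDerivAt_pow (n+1) w).div_const (((n : ℝ) + 1) ^ 2)
      refine h.congr_deriv (Eq.symm ?_)
      push_cast
      have hn : ((n:ℝ)+1) ≠ 0 := by positivity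
      field_simp
    · intro n w hw
      rw [norm_div, norm_pow]
      have hn1 : (1:ℝ) ≤ ‖((n:ℝ)+1)‖ := by
        rw [Real.norm_eq_abs, abs_of_nonneg (by positivity)]
        linarith [Nat.cast_nonneg (α := ℝ) n]
      calc ‖w‖ ^ n / ‖((n:ℝ)+1)‖ ≤ ‖w‖ ^ n := div_le_self (by positivity) hn1
        _ ≤ r ^ n := by
            gcongr
            rw [Real.norm_eq_abs, abs_le]
            exact ⟨hw.1.le, hw.2.le⟩
    · exact Set.mem_Ioo.mpr ⟨by linarith, hr0⟩
    · apply summable_of_ne_finset_zero (s := ∅)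
      intro n _
      simp
    · exact Set.mem_Ioo.mpr ⟨by linarith, hzr⟩
  have hsum : HasSum (fun n : ℕ => z ^ n / ((n : ℝ) + 1)) (-Real.log (1 - z) / z) := by
    have h := Real.hasSum_pow_div_log_of_abs_lt_one
      (x := z) (by rw [abs_of_pos h0]; exact h1)
    have h2 := h.div_const z
    convert h2 using 2 with n
    · rfl
    · rw [pow_succ]
      field_simp
  rw [hsum.tsum_eq] at key
  exact key

lemma rogers_hasDerivAt {z : ℝ} (h0 : 0 < z) (h1 : z < 1) :
    HasDerivAt RogersL
      (-(1/2) * (Real.log (1 - z) / z + Real.log z / (1 - z))) z := by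
  have hz1 : (0:ℝ) < 1 - z := by linarith
  have hlog1 : HasDerivAt Real.log z⁻¹ z := Real.hasDerivAt_log h0.ne'
  have hlog2 : HasDerivAt (fun w => Real.log (1 - w)) (-(1 - z)⁻¹) z := by
    have h := ((hasDerivAt_id z).const_sub 1).log hz1.ne'
    refine h.congr_deriv (Eq.symm ?_)
    simp only [id]
    field_simp
  have hprod : HasDerivAt (fun w => (1/2) * Real.log w * Real.log (1 - w))
      ((1/2) * (z⁻¹ * Real.log (1 - z) + Real.log z * (-(1 - z)⁻¹))) z := by
    have h := ((hlog1.const_mul (1/2:ℝ)).mul hlog2)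
    refine h.congr_deriv (Eq.symm ?_)
    ring
  have h := (li2_hasDerivAt h0 h1).add hprod
  refine h.congr_deriv (Eq.symm ?_)
  field_simp
  ring

lemma five_term_hasDerivAt_zero {y : ℝ} (hy : y ∈ Set.Ioo (0:ℝ) 1) {x : ℝ}
    (hx : x ∈ Set.Ioo (0:ℝ) 1) :
    HasDerivAt (fun x => RogersL x + RogersL ((1 - x) / (1 - x * y)) +
      RogersL ((1 - y) / (1 - x * y)) + RogersL y + RogersL (1 - x * y)) 0 x := by
  obtain ⟨hx0, hx1⟩ := hx
  obtain ⟨hy0, hy1⟩ := hy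
  have hxy1 : x * y < 1 := by nlinarith
  have hu0 : (0:ℝ) < 1 - x * y := by linarith
  have hu1 : 1 - x * y < 1 := by nlinarith
  have hxu : 1 - x < 1 - x * y := by nlinarith
  have hyu : 1 - y < 1 - x * y := by nlinarith
  have ha0 : 0 < (1 - x) / (1 - x * y) := div_pos (by linarith) hu0
  have ha1 : (1 - x) / (1 - x * y) < 1 := (div_lt_one hu0).mpr hxu
  have hb0 : 0 < (1 - y) / (1 - x * y) := div_pos (by linarith) hu0
  have hb1 : (1 - y) / (1 - x * y) < 1 := (div_lt_one hu0).mpr hyu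
  -- inner derivatives
  have hC : HasDerivAt (fun x => 1 - x * y) (-y) x := by
    simpa using ((hasDerivAt_id x).mul_const y).const_sub 1
  have hD : HasDerivAt (fun x : ℝ => 1 - x) (-1 : ℝ) x := by
    simpa using (hasDerivAt_id x).const_sub 1
  have hA : HasDerivAt (fun x => (1 - x) / (1 - x * y))
      (((-1) * (1 - x * y) - (1 - x) * (-y)) / (1 - x * y) ^ 2) x :=
    hD.div hC hu0.ne'
  have hB : HasDerivAt (fun x => (1 - y) / (1 - x * y))
      ((0 * (1 - x * y) - (1 - y) * (-y)) / (1 - x * y) ^ 2) x :=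
    (hasDerivAt_const x (1 - y)).div hC hu0.ne'
  have h1 := rogers_hasDerivAt hx0 hx1
  have h2 := (rogers_hasDerivAt ha0 ha1).comp x hA
  have h3 := (rogers_hasDerivAt hb0 hb1).comp x hB
  have h4 := hasDerivAt_const x (RogersL y)
  have h5 := (rogers_hasDerivAt hu0 hu1).comp x hC
  have htot := (((h1.add h2).add h3).add h4).add h5
  refine htot.congr_deriv (Eq.symm ?_)
  -- show the total derivative is 0
  have hsa : 1 - (1 - x) / (1 - x * y) = x * (1 - y) / (1 - x * y) := by
    field_simp; ring
  have hsb : 1 - (1 - y) / (1 - x * y) = y * (1 - x) / (1 - x * y) := by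
    rw [one_sub_div hu0.ne']; congr 1; ring
  have hsu : 1 - (1 - x * y) = x * y := by ring
  rw [hsa, hsb, hsu]
  have l1 : Real.log ((1 - x) / (1 - x * y)) = Real.log (1 - x) - Real.log (1 - x * y) :=
    Real.log_div (by linarith) hu0.ne'
  have l2 : Real.log (x * (1 - y) / (1 - x * y)) =
      Real.log x + Real.log (1 - y) - Real.log (1 - x * y) := by
    rw [Real.log_div (by nlinarith : x * (1-y) ≠ 0) hu0.ne', Real.log_mul hx0.ne' (by linarith)]
  have l3 : Real.log ((1 - y) / (1 - x * y)) = Real.log (1 - y) - Real.log (1 - x * y) :=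
    Real.log_div (by linarith) hu0.ne'
  have l4 : Real.log (y * (1 - x) / (1 - x * y)) =
      Real.log y + Real.log (1 - x) - Real.log (1 - x * y) := by
    rw [Real.log_div (by nlinarith : y * (1-x) ≠ 0) hu0.ne', Real.log_mul hy0.ne' (by linarith)]
  have l5 : Real.log (x * y) = Real.log x + Real.log y :=
    Real.log_mul hx0.ne' hy0.ne'
  rw [l1, l2, l3, l4, l5]
  have hx' : x ≠ 0 := hx0.ne'
  have hx1' : (1:ℝ) - x ≠ 0 := by linarith
  have hy' : y ≠ 0 := hy0.ne'
  have hy1' : (1:ℝ) - y ≠ 0 := by linarith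
  have hu' : (1:ℝ) - x * y ≠ 0 := hu0.ne'
  field_simp
  ring

lemma five_term_const {y : ℝ} (hy : y ∈ Set.Ioo (0:ℝ) 1) {x₁ x₂ : ℝ}
    (h1 : x₁ ∈ Set.Ioo (0:ℝ) 1) (h2 : x₂ ∈ Set.Ioo (0:ℝ) 1) :
    RogersL x₁ + RogersL ((1 - x₁) / (1 - x₁ * y)) +
      RogersL ((1 - y) / (1 - x₁ * y)) + RogersL y + RogersL (1 - x₁ * y) =
    RogersL x₂ + RogersL ((1 - x₂) / (1 - x₂ * y)) +
      RogersL ((1 - y) / (1 - x₂ * y)) + RogersL y + RogersL (1 - x₂ * y) := by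
  set g := fun x => RogersL x + RogersL ((1 - x) / (1 - x * y)) +
      RogersL ((1 - y) / (1 - x * y)) + RogersL y + RogersL (1 - x * y) with hg
  have key : ∀ a b : ℝ, a ∈ Set.Ioo (0:ℝ) 1 → b ∈ Set.Ioo (0:ℝ) 1 → a < b → g a = g b := by
    intro a b ha hb hab
    have hsub : Set.Icc a b ⊆ Set.Ioo (0:ℝ) 1 := fun t ht =>
      ⟨lt_of_lt_of_le ha.1 ht.1, lt_of_le_of_lt ht.2 hb.2⟩
    have hcont : ContinuousOn g (Set.Icc a b) := fun t ht =>
      ((five_term_hasDerivAt_zero hy (hsub ht)).continuousAt).continuousWithinAt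
    have hderiv : ∀ t ∈ Set.Ioo a b, HasDerivAt g ((fun _ => (0:ℝ)) t) t := fun t ht =>
      five_term_hasDerivAt_zero hy (hsub ⟨ht.1.le, ht.2.le⟩)
    obtain ⟨c, _, hc⟩ := exists_hasDerivAt_eq_slope g (fun _ => (0:ℝ)) hab hcont hderiv
    rcases div_eq_zero_iff.mp hc.symm with hc' | hc'
    · linarith
    · exfalso; have := sub_ne_zero.mpr hab.ne'; exact this hc'
  rcases lt_trichotomy x₁ x₂ with h | h | h
  · exact key _ _ h1 h2 h
  · rw [h]
  · exact (key _ _ h2 h1 h).symm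

lemma tendsto_log_mul_log :
    Filter.Tendsto (fun z => Real.log z * Real.log (1 - z)) (nhdsWithin 0 (Set.Ioi 0)) (nhds 0) := by
  have hslope : Filter.Tendsto (fun z : ℝ => Real.log (1 - z) / z)
      (nhdsWithin 0 (Set.Ioi 0)) (nhds (-1)) := by
    have hd : HasDerivAt (fun z : ℝ => Real.log (1 - z)) (-1) (0:ℝ) := by
      have h := ((hasDerivAt_id (0:ℝ)).const_sub 1).log (by norm_num)
      refine h.congr_deriv (Eq.symm ?_)
      norm_num
    have := hasDerivAt_iff_tendsto_slope.mp hd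
    have h2 : Filter.Tendsto (slope (fun z : ℝ => Real.log (1 - z)) 0)
        (nhdsWithin 0 (Set.Ioi 0)) (nhds (-1)) :=
      this.mono_left (nhdsWithin_mono _ (fun t ht => ne_of_gt ht))
    apply h2.congr'
    filter_upwards [self_mem_nhdsWithin] with t ht
    simp [slope_def_field]
  have hmul : Filter.Tendsto (fun z : ℝ => z * Real.log z)
      (nhdsWithin 0 (Set.Ioi 0)) (nhds 0) := by
    have h := continuous_mul_log.tendsto 0
    simp only [Real.log_zero, mul_zero, zero_mul] at h
    exact h.mono_left nhdsWithin_le_nhds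
  have h := hmul.mul hslope
  rw [zero_mul] at h
  apply h.congr'
  filter_upwards [self_mem_nhdsWithin] with t ht
  have : t ≠ 0 := ne_of_gt ht
  field_simp

lemma li2_tendsto_zero : Filter.Tendsto Li2R (nhdsWithin 0 (Set.Ioi 0)) (nhds 0) := by
  have h := (li2_continuousOn 0 (by norm_num)).tendsto
  rw [li2_zero] at h
  rw [← nhdsWithin_Ioo_eq_nhdsGT (by norm_num : (0:ℝ) < 1)]
  exact h.mono_left (nhdsWithin_mono _ (fun t ht => ⟨by linarith [ht.1], ht.2.le⟩))

lemma li2_tendsto_one : Filter.Tendsto Li2R (nhdsWithin 1 (Set.Iio 1)) (nhds (π ^ 2 / 6)) := by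
  have h := (li2_continuousOn 1 (by norm_num)).tendsto
  rw [li2_one] at h
  rw [← nhdsWithin_Ioo_eq_nhdsLT (by norm_num : (0:ℝ) < 1)]
  exact h.mono_left (nhdsWithin_mono _ (fun t ht => ⟨by linarith [ht.1], ht.2.le⟩))

lemma rogers_tendsto_zero : Filter.Tendsto RogersL (nhdsWithin 0 (Set.Ioi 0)) (nhds 0) := by
  have h := li2_tendsto_zero.add ((tendsto_log_mul_log.const_mul (1/2:ℝ)))
  simp only [mul_zero, add_zero] at h
  apply h.congr
  intro t
  simp [RogersL]
  ring

lemma rogers_tendsto_one : Filter.Tendsto RogersL (nhdsWithin 1 (Set.Iio 1)) (nhds (π ^ 2 / 6)) := by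
  have hcomp : Filter.Tendsto (fun z : ℝ => 1 - z) (nhdsWithin 1 (Set.Iio 1))
      (nhdsWithin 0 (Set.Ioi 0)) := by
    rw [tendsto_nhdsWithin_iff]
    constructor
    · have : Filter.Tendsto (fun z : ℝ => 1 - z) (nhds 1) (nhds 0) := by
        have := ((continuous_const (y := (1:ℝ))).sub continuous_id).tendsto (1:ℝ)
        simpa [Pi.sub_def] using this
      exact this.mono_left nhdsWithin_le_nhds
    · filter_upwards [self_mem_nhdsWithin] with t ht
      simp only [Set.mem_Iio] at ht
      exact Set.mem_Ioi.mpr (by linarith)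
  have hlog : Filter.Tendsto (fun z : ℝ => Real.log z * Real.log (1 - z))
      (nhdsWithin 1 (Set.Iio 1)) (nhds 0) := by
    have h := tendsto_log_mul_log.comp hcomp
    apply h.congr
    intro t
    simp only [Function.comp]
    rw [show (1:ℝ) - (1 - t) = t by ring]
    ring
  have h := li2_tendsto_one.add (hlog.const_mul (1/2:ℝ))
  simp only [mul_zero, add_zero] at h
  apply h.congr
  intro t
  simp [RogersL]
  ring

lemma five_symm (a b : ℝ) :
    RogersL a + RogersL ((1 - a) / (1 - a * b)) +
      RogersL ((1 - b) / (1 - a * b)) + RogersL b + RogersL (1 - a * b) =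
    RogersL b + RogersL ((1 - b) / (1 - b * a)) +
      RogersL ((1 - a) / (1 - b * a)) + RogersL a + RogersL (1 - b * a) := by
  rw [mul_comm b a]
  ring

/-- Abel's five-term relation: for `x, y ∈ (0,1)`,
`R(x) + R((1−x)/(1−xy)) + R((1−y)/(1−xy)) + R(y) + R(1−xy) = π²/2`. -/
theorem abel_five_term (x y : ℝ)
    (hx : x ∈ Set.Ioo (0 : ℝ) 1) (hy : y ∈ Set.Ioo (0 : ℝ) 1) :
    RogersL x + RogersL ((1 - x) / (1 - x * y)) + RogersL ((1 - y) / (1 - x * y)) +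
      RogersL y + RogersL (1 - x * y) = Real.pi ^ 2 / 2 := by
  have hhalf : (1/2 : ℝ) ∈ Set.Ioo (0:ℝ) 1 := by norm_num
  -- F x y = F (1/2) (1/2)
  set c : ℝ := RogersL (1/2) + RogersL ((1 - 1/2) / (1 - (1/2) * (1/2))) +
      RogersL ((1 - 1/2) / (1 - (1/2) * (1/2))) + RogersL (1/2) +
      RogersL (1 - (1/2) * (1/2)) with hc
  have hFc : ∀ a ∈ Set.Ioo (0:ℝ) 1, ∀ b ∈ Set.Ioo (0:ℝ) 1,
      RogersL a + RogersL ((1 - a) / (1 - a * b)) +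
        RogersL ((1 - b) / (1 - a * b)) + RogersL b + RogersL (1 - a * b) = c := by
    intro a ha b hb
    calc RogersL a + RogersL ((1 - a) / (1 - a * b)) +
          RogersL ((1 - b) / (1 - a * b)) + RogersL b + RogersL (1 - a * b)
        = RogersL (1/2) + RogersL ((1 - 1/2) / (1 - (1/2) * b)) +
          RogersL ((1 - b) / (1 - (1/2) * b)) + RogersL b + RogersL (1 - (1/2) * b) :=
          five_term_const hb ha hhalf
      _ = RogersL b + RogersL ((1 - b) / (1 - b * (1/2))) +
          RogersL ((1 - 1/2) / (1 - b * (1/2))) + RogersL (1/2) + RogersL (1 - b * (1/2)) :=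
          five_symm _ _
      _ = RogersL (1/2) + RogersL ((1 - 1/2) / (1 - (1/2) * (1/2))) +
          RogersL ((1 - 1/2) / (1 - (1/2) * (1/2))) + RogersL (1/2) +
          RogersL (1 - (1/2) * (1/2)) := five_term_const hhalf hb hhalf
      _ = c := hc.symm
  -- compute c via the limit t → 0⁺ along the diagonal
  have harg : Filter.Tendsto (fun t : ℝ => (1 - t) / (1 - t * t))
      (nhdsWithin 0 (Set.Ioi 0)) (nhdsWithin 1 (Set.Iio 1)) := by
    rw [tendsto_nhdsWithin_iff]
    constructor
    · have hcont : ContinuousAt (fun t : ℝ => (1 - t) / (1 - t * t)) 0 := by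
        apply ContinuousAt.div
        · fun_prop
        · fun_prop
        · norm_num
      have := hcont.tendsto
      norm_num at this
      exact this.mono_left nhdsWithin_le_nhds
    · filter_upwards [Ioo_mem_nhdsGT_of_mem (Set.mem_Ico.mpr ⟨le_refl (0:ℝ), zero_lt_one⟩)]
        with t ht
      obtain ⟨ht0, ht1⟩ := ht
      have h1 : (0:ℝ) < 1 - t * t := by nlinarith
      exact Set.mem_Iio.mpr ((div_lt_one h1).mpr (by nlinarith))
  have harg2 : Filter.Tendsto (fun t : ℝ => 1 - t * t)
      (nhdsWithin 0 (Set.Ioi 0)) (nhdsWithin 1 (Set.Iio 1)) := by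
    rw [tendsto_nhdsWithin_iff]
    constructor
    · have hcont : ContinuousAt (fun t : ℝ => 1 - t * t) 0 := by fun_prop
      have := hcont.tendsto
      norm_num at this
      exact this.mono_left nhdsWithin_le_nhds
    · filter_upwards [Ioo_mem_nhdsGT_of_mem (Set.mem_Ico.mpr ⟨le_refl (0:ℝ), zero_lt_one⟩)]
        with t ht
      obtain ⟨ht0, ht1⟩ := ht
      exact Set.mem_Iio.mpr (by nlinarith)
  have h0 : Filter.Tendsto (fun t : ℝ => RogersL t) (nhdsWithin 0 (Set.Ioi 0)) (nhds 0) :=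
    rogers_tendsto_zero
  have h2 := rogers_tendsto_one.comp harg
  have h5 := rogers_tendsto_one.comp harg2
  have htot := (((h0.add h2).add h2).add h0).add h5
  have hval : (0:ℝ) + π^2/6 + π^2/6 + 0 + π^2/6 = π^2/2 := by ring
  rw [hval] at htot
  have heq : (fun t : ℝ => RogersL t + RogersL ((1 - t) / (1 - t * t)) +
      RogersL ((1 - t) / (1 - t * t)) + RogersL t + RogersL (1 - t * t)) =ᶠ[nhdsWithin 0 (Set.Ioi 0)]
      (fun _ => c) := by
    filter_upwards [Ioo_mem_nhdsGT_of_mem (Set.mem_Ico.mpr ⟨le_refl (0:ℝ), zero_lt_one⟩)]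
      with t ht
    exact hFc t ht t ht
  have htot' : Filter.Tendsto (fun t : ℝ => RogersL t + RogersL ((1 - t) / (1 - t * t)) +
      RogersL ((1 - t) / (1 - t * t)) + RogersL t + RogersL (1 - t * t))
      (nhdsWithin 0 (Set.Ioi 0)) (nhds (π^2/2)) := htot
  have hcval : c = π^2/2 := tendsto_nhds_unique tendsto_const_nhds (htot'.congr' heq)
  rw [hFc x hx y hy, hcval]
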